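/- arXiv:2601.03970 — 3 statements merged into one kernel-verified Lean document; each statement's English description precedes it below -/
import Mathlib

section
/- If two words w and w' over the positive integers are related by the Knuth relation (K), i.e., w = u·bca·v and w' = u·bac·v with a < b ≤ c, then their labeled versions φ_w(w) and φ_w(w') (where each occurrence of an integer k is subscripted 1, 2, ... from left to right) are related by the Knuth relation (K) over the labeled alphabet. -/
open scoped BigOperators

/-! ## Words and Knuth relations -/

/-- Knuth relation (K): `u·bca·v ~ u·bac·v` with `a < b ≤ c`. -/
def KnuthK {α : Type*} [LinearOrder α] (w w' : List α) : Prop :=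
  ∃ (u v : List α) (a b c : α), a < b ∧ b ≤ c ∧
    w = u ++ [b, c, a] ++ v ∧ w' = u ++ [b, a, c] ++ v

/-- Knuth relation (K'): `u·acb·v ~ u·cab·v` with `a ≤ b < c`. -/
def KnuthK' {α : Type*} [LinearOrder α] (w w' : List α) : Prop :=
  ∃ (u v : List α) (a b c : α), a ≤ b ∧ b < c ∧
    w = u ++ [a, c, b] ++ v ∧ w' = u ++ [c, a, b] ++ v

/-- One step of a Knuth relation, in either direction. -/
def KnuthRel {α : Type*} [LinearOrder α] (w w' : List α) : Prop :=
  KnuthK w w' ∨ KnuthK w' w ∨ KnuthK' w w' ∨ KnuthK' w' w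

/-- Knuth equivalence: the reflexive-transitive closure of the Knuth relations. -/
def KnuthEquiv {α : Type*} [LinearOrder α] : List α → List α → Prop :=
  Relation.ReflTransGen KnuthRel

/-- The labeled alphabet Ñ = ℕ ×ₗ ℕ, ordered first by the letter, then by the label. -/
abbrev LblN := Lex (ℕ × ℕ)

instance : Inhabited LblN := ⟨toLex default⟩

/-- The labeling map φ_w : each occurrence of the integer `k` gets subscripts 1, 2, ...
from left to right. -/
def phiW (w : List ℕ) : List LblN :=
  (w.zipIdx.map Prod.swap).map fun p => toLex (p.2, (w.take p.1).count p.2 + 1)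

/-- The label-forgetting map, sending `k_l` to `k`. -/
def forgetW (w : List LblN) : List ℕ := w.map fun x => (ofLex x).1

/-! ## Partitions, skew shapes, tableaux -/

/-- A partition, recorded as its sequence of (1-indexed) row lengths, with `p 0 = 0`. -/
def IsPartition (p : ℕ → ℕ) : Prop :=
  p 0 = 0 ∧ (∀ i, 1 ≤ i → p (i + 1) ≤ p i) ∧ ∃ N, ∀ i, N ≤ i → p i = 0

/-- The empty partition. -/
def zeroPart : ℕ → ℕ := fun _ => 0

/-- The boxes of the skew diagram λ/μ (rows and columns indexed from 1). -/
def cells (lam mu : ℕ → ℕ) : Set (ℕ × ℕ) :=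
  {c | 1 ≤ c.1 ∧ mu c.1 < c.2 ∧ c.2 ≤ lam c.1}

/-- The semistandardness condition for a filling of λ/μ: rows weakly increase and
columns strictly increase. -/
def IsSSYT {α : Type*} [Preorder α] (lam mu : ℕ → ℕ) (T : ℕ × ℕ → α) : Prop :=
  (∀ i j, (i, j) ∈ cells lam mu → (i, j + 1) ∈ cells lam mu → T (i, j) ≤ T (i, j + 1)) ∧
  (∀ i j, (i, j) ∈ cells lam mu → (i + 1, j) ∈ cells lam mu → T (i, j) < T (i + 1, j))

/-- The conjugate partition: `conj p j = #{i ≥ 1 | p i ≥ j}`. -/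
noncomputable def conj (p : ℕ → ℕ) (j : ℕ) : ℕ :=
  Set.ncard {i : ℕ | 1 ≤ i ∧ j ≤ p i}

/-- The number of (nonempty) rows of a shape. -/
noncomputable def numRows (lam : ℕ → ℕ) : ℕ :=
  sInf {N | ∀ i, N < i → lam i = 0}

/-- The i-th row of a tableau, read left to right. -/
def rowOf {α : Type*} (lam mu : ℕ → ℕ) (T : ℕ × ℕ → α) (i : ℕ) : List α :=
  (List.range (lam i - mu i)).map fun k => T (i, mu i + k + 1)

/-- Rows `n, n-1, ..., 1` of a tableau, concatenated. -/
def rowWordUpTo {α : Type*} (lam mu : ℕ → ℕ) (T : ℕ × ℕ → α) : ℕ → List α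
  | 0 => []
  | n + 1 => rowOf lam mu T (n + 1) ++ rowWordUpTo lam mu T n

/-- The row word of a tableau: rows read left to right, from the bottom row up. -/
noncomputable def rowWord {α : Type*} (lam mu : ℕ → ℕ) (T : ℕ × ℕ → α) : List α :=
  rowWordUpTo lam mu T (numRows lam)

/-- The rectification of a word: the (shape, tableau) pair of a normal-shape
semistandard tableau whose row word is Knuth equivalent to the given word. -/
noncomputable def rectPair {α : Type*} [LinearOrder α] [Inhabited α] (w : List α) :
    (ℕ → ℕ) × (ℕ × ℕ → α) := by
  classical
  exact if h : ∃ p : (ℕ → ℕ) × (ℕ × ℕ → α),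
      IsPartition p.1 ∧ IsSSYT p.1 zeroPart p.2 ∧ KnuthEquiv (rowWord p.1 zeroPart p.2) w
    then h.choose else (zeroPart, fun _ => default)

/-- The shape of the rectification of a word. -/
noncomputable def rectShape {α : Type*} [LinearOrder α] [Inhabited α] (w : List α) : ℕ → ℕ :=
  (rectPair w).1

/-- The tableau of the rectification of a word. -/
noncomputable def rectTab {α : Type*} [LinearOrder α] [Inhabited α] (w : List α) :
    ℕ × ℕ → α :=
  (rectPair w).2

/-- The labeling map φ_T on tableaux: each occurrence of the integer `k` gets subscripts
1, 2, ... from the bottom row up, left to right within each row. -/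
noncomputable def phiT (lam mu : ℕ → ℕ) (T : ℕ × ℕ → ℕ) : ℕ × ℕ → LblN :=
  fun c => toLex (T c,
    Set.ncard {d ∈ cells lam mu | T d = T c ∧ (c.1 < d.1 ∨ (d.1 = c.1 ∧ d.2 < c.2))} + 1)

/-! ## Arms and body -/

/-- `∑_{i ≥ 2} (λ_i − μ_i)`. -/
noncomputable def tailSum (lam mu : ℕ → ℕ) : ℕ :=
  ∑ᶠ i : ℕ, if 2 ≤ i then lam i - mu i else 0

/-- `m = min{λ₂, Σ_{i≥2}(λᵢ − μᵢ)}`. -/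
noncomputable def armM (lam mu : ℕ → ℕ) : ℕ := min (lam 2) (tailSum lam mu)

/-- `n = min{λ'₂, Σ_{j≥2}(λ'ⱼ − μ'ⱼ)}`. -/
noncomputable def armN (lam mu : ℕ → ℕ) : ℕ := min (conj lam 2) (tailSum (conj lam) (conj mu))

/-- The right-arm of λ/μ: boxes `(1, m+μ₁), ..., (1, λ₁)`. -/
noncomputable def rightArm (lam mu : ℕ → ℕ) : Set (ℕ × ℕ) :=
  {c | c.1 = 1 ∧ armM lam mu + mu 1 ≤ c.2 ∧ c.2 ≤ lam 1}

/-- The left-arm of λ/μ: boxes `(n+μ'₁, 1), ..., (λ'₁, 1)`. -/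
noncomputable def leftArm (lam mu : ℕ → ℕ) : Set (ℕ × ℕ) :=
  {c | c.2 = 1 ∧ armN lam mu + conj mu 1 ≤ c.1 ∧ c.1 ≤ conj lam 1}

/-- The body of λ/μ: the boxes that are in neither arm. -/
noncomputable def body (lam mu : ℕ → ℕ) : Set (ℕ × ℕ) :=
  cells lam mu \ (rightArm lam mu ∪ leftArm lam mu)

/-! ## Semistandard tableaux over positive integers, Schur multiple zeta functions -/

/-- Semistandard Young tableaux of shape λ/μ with positive integer entries,
normalized to be `0` outside the diagram. -/
def SSYTset (lam mu : ℕ → ℕ) : Set (ℕ × ℕ → ℕ) :=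
  {T | IsSSYT lam mu T ∧ (∀ c ∈ cells lam mu, 1 ≤ T c) ∧ ∀ c, c ∉ cells lam mu → T c = 0}

/-- The Schur multiple zeta function of shape λ/μ. -/
noncomputable def schurZeta (lam mu : ℕ → ℕ) (s : ℕ × ℕ → ℂ) : ℂ :=
  ∑' M : SSYTset lam mu, ∏ᶠ c ∈ cells lam mu, ((M : ℕ × ℕ → ℕ) c : ℂ) ^ (-(s c))

/-- A corner of λ/μ. -/
def ShapeCorner (lam mu : ℕ → ℕ) (c : ℕ × ℕ) : Prop :=
  c ∈ cells lam mu ∧ (c.1 + 1, c.2) ∉ cells lam mu ∧ (c.1, c.2 + 1) ∉ cells lam mu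

/-- The domain of absolute convergence `W_{λ/μ}`. -/
def InDomain (lam mu : ℕ → ℕ) (s : ℕ × ℕ → ℂ) : Prop :=
  ∀ c ∈ cells lam mu, 1 ≤ (s c).re ∧ (ShapeCorner lam mu c → 1 < (s c).re)

/-! ## The shape μ * ν -/

/-- The outer shape ψ of μ * ν: `ψᵢ = μ₁ + νᵢ` for `i ≤ ℓ(ν)`, `ψᵢ = μ_{i−ℓ(ν)}` else. -/
noncomputable def starOuter (mu nu : ℕ → ℕ) : ℕ → ℕ := fun i =>
  if i = 0 then 0 else if i ≤ conj nu 1 then mu 1 + nu i else mu (i - conj nu 1)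

/-- The inner (rectangle) shape of μ * ν : μ₁ columns and ν'₁ rows. -/
noncomputable def starInner (mu nu : ℕ → ℕ) : ℕ → ℕ := fun i =>
  if 1 ≤ i ∧ i ≤ conj nu 1 then mu 1 else 0

/-- The filling `S * T` of μ * ν : `S` (shape μ) below, `T` (shape ν) to the right. -/
noncomputable def starTab {γ : Type*} (mu nu : ℕ → ℕ) (s t : ℕ × ℕ → γ) : ℕ × ℕ → γ :=
  fun c => if c.1 ≤ conj nu 1 then t (c.1, c.2 - mu 1) else s (c.1 - conj nu 1, c.2)

/-! ## Schur functions as formal power series, Littlewood–Richardson coefficients -/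

/-- The (skew) Schur function `s_{λ/μ}` as a formal power series in variables
`x₀, x₁, x₂, ...` : the coefficient of a monomial `d` is the number of semistandard
tableaux of shape λ/μ and content `d`. -/
noncomputable def schurSeries (lam mu : ℕ → ℕ) : MvPowerSeries ℕ ℤ :=
  fun d => (Set.ncard {T ∈ SSYTset lam mu |
    ∀ k : ℕ, d k = Set.ncard {c ∈ cells lam mu | T c = k}} : ℤ)

/-- The power series `Σ_λ c_λ · s_λ`, the sum ranging over all partitions λ. -/
noncomputable def seriesSum (cc : (ℕ → ℕ) → ℕ) : MvPowerSeries ℕ ℤ :=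
  fun d => ∑ᶠ lam ∈ {p : ℕ → ℕ | IsPartition p}, (cc lam : ℤ) * schurSeries lam zeroPart d

/-! ## Jeu de taquin slides -/

/-- One elementary jeu de taquin slide on a configuration (hole, filled region, filling):
the smaller of the entries to the right of and below the hole moves into the hole
(the one below moving in case of a tie), and the hole moves to the vacated box. -/
inductive JdtStep {α : Type*} [LinearOrder α] :
    ((ℕ × ℕ) × Set (ℕ × ℕ) × (ℕ × ℕ → α)) → ((ℕ × ℕ) × Set (ℕ × ℕ) × (ℕ × ℕ → α)) → Prop
  | right (h : ℕ × ℕ) (S : Set (ℕ × ℕ)) (T : ℕ × ℕ → α)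
      (hr : (h.1, h.2 + 1) ∈ S)
      (hcmp : (h.1 + 1, h.2) ∈ S → T (h.1, h.2 + 1) < T (h.1 + 1, h.2)) :
      JdtStep (h, S, T)
        ((h.1, h.2 + 1), insert h (S \ {(h.1, h.2 + 1)}),
          Function.update T h (T (h.1, h.2 + 1)))
  | down (h : ℕ × ℕ) (S : Set (ℕ × ℕ)) (T : ℕ × ℕ → α)
      (hd : (h.1 + 1, h.2) ∈ S)
      (hcmp : (h.1, h.2 + 1) ∈ S → T (h.1 + 1, h.2) ≤ T (h.1, h.2 + 1)) :
      JdtStep (h, S, T)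
        ((h.1 + 1, h.2), insert h (S \ {(h.1 + 1, h.2)}),
          Function.update T h (T (h.1 + 1, h.2)))

/-- An inside corner of λ/μ: a corner `c` of the deleted diagram μ. -/
def InsideCorner (lam mu : ℕ → ℕ) (c : ℕ × ℕ) : Prop :=
  1 ≤ c.1 ∧ 1 ≤ c.2 ∧ c.2 = mu c.1 ∧ mu (c.1 + 1) < c.2

/-- A full jeu de taquin slide from an inside corner, acting on (outer shape, inner
shape, filling) triples: the hole starts at an inside corner `c`, elementary slides are
repeated until the hole has no neighbor to its right or below, and then the hole
(at an outside corner `h`) is removed. -/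
def SlideRel {α : Type*} [LinearOrder α] :
    ((ℕ → ℕ) × (ℕ → ℕ) × (ℕ × ℕ → α)) → ((ℕ → ℕ) × (ℕ → ℕ) × (ℕ × ℕ → α)) → Prop :=
  fun p q =>
    ∃ c h : ℕ × ℕ, InsideCorner p.1 p.2.1 c ∧
      Relation.ReflTransGen JdtStep (c, cells p.1 p.2.1, p.2.2)
        (h, insert c (cells p.1 p.2.1) \ {h}, q.2.2) ∧
      (h.1, h.2 + 1) ∉ insert c (cells p.1 p.2.1) ∧
      (h.1 + 1, h.2) ∉ insert c (cells p.1 p.2.1) ∧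
      h.2 = p.1 h.1 ∧
      q.1 = Function.update p.1 h.1 (h.2 - 1) ∧
      q.2.1 = Function.update p.2.1 c.1 (c.2 - 1)



/-- Relative labeling: label the letters of `t` given that `pre` came before. -/
def labAux : List ℕ → List ℕ → List LblN
  | _, [] => []
  | pre, x :: t => toLex (x, pre.count x + 1) :: labAux (pre ++ [x]) t

lemma labAux_enumFrom (t : List ℕ) : ∀ (pre : List ℕ) (n : ℕ),
    ((t.zipIdx n).map Prod.swap).map (fun p => toLex (p.2, (pre ++ t.take (p.1 - n)).count p.2 + 1))
      = labAux pre t := by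
  induction t with
  | nil => intro pre n; simp [labAux]
  | cons x t ih =>
    intro pre n
    rw [List.zipIdx_cons, List.map_cons, List.map_cons, labAux]
    congr 1
    · simp
    · rw [← ih (pre ++ [x]) (n + 1)]
      apply List.map_congr_left
      rintro ⟨i, y⟩ hp
      have h1 : n + 1 ≤ i := by
        obtain ⟨⟨y', i'⟩, hm, he⟩ := List.mem_map.1 hp
        simp only [Prod.swap, Prod.mk.injEq] at he
        obtain ⟨rfl, rfl⟩ := he
        exact (List.mem_zipIdx hm).1
      have h2 : (x :: t).take (i - n) = x :: t.take (i - (n + 1)) := by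
        have : i - n = (i - (n + 1)) + 1 := by omega
        rw [this, List.take_succ_cons]
      simp only [h2]
      rw [List.append_cons pre x]

lemma labAux_append (s : List ℕ) : ∀ (t pre : List ℕ),
    labAux pre (s ++ t) = labAux pre s ++ labAux (pre ++ s) t := by
  induction s with
  | nil => intro t pre; simp [labAux]
  | cons x s ih =>
    intro t pre
    simp only [List.cons_append, labAux, List.append_eq, ih, List.append_assoc,
      List.singleton_append, List.nil_append]

lemma labAux_congr (t : List ℕ) : ∀ (pre₁ pre₂ : List ℕ),
    (∀ x, pre₁.count x = pre₂.count x) → labAux pre₁ t = labAux pre₂ t := by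
  induction t with
  | nil => intros; rfl
  | cons x t ih =>
    intro pre₁ pre₂ h
    simp only [labAux, h x]
    congr 1
    exact ih _ _ fun y => by simp [List.count_append, h y]

lemma phiW_eq_labAux (w : List ℕ) : phiW w = labAux [] w := by
  rw [← labAux_enumFrom w [] 0]
  simp [phiW]

theorem knuthK_phiW (w w' : List ℕ) (h : KnuthK w w') : KnuthK (phiW w) (phiW w'):= by
  obtain ⟨u, v, a, b, c, hab, hbc, hw, hw'⟩ := h
  have hane : a ≠ b := ne_of_lt hab
  have hac : a ≠ c := ne_of_lt (lt_of_lt_of_le hab hbc)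
  refine ⟨labAux [] u, labAux (u ++ [b, c, a]) v,
    toLex (a, u.count a + 1), toLex (b, u.count b + 1), toLex (c, (u ++ [b]).count c + 1),
    ?_, ?_, ?_, ?_⟩
  · rw [Prod.Lex.lt_iff]; left; exact hab
  · rw [Prod.Lex.le_iff]
    rcases lt_or_eq_of_le hbc with h | h
    · left; exact h
    · right
      refine ⟨h, ?_⟩
      subst h
      simp [List.count_append]
  · subst hw
    rw [phiW_eq_labAux, labAux_append, labAux_append]
    congr 1
    simp only [labAux, List.nil_append]
    congr 3
    · rw [List.count_append, List.count_append]
      simp [List.count_cons, hane, hac, hane.symm, hac.symm]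
  · subst hw'
    rw [phiW_eq_labAux, labAux_append, labAux_append]
    congr 1
    · simp only [labAux, List.nil_append]
      congr 3
      · rw [List.count_append]
        simp [List.count_cons, hane, hane.symm]
      · rw [List.count_append, List.count_append]
        simp [List.count_cons, hac]
    · rw [List.nil_append]
      apply labAux_congr
      intro x
      simp [List.count_append, List.count_cons]
      omega
end

section
/- If two words w, w' over ℕ are Knuth equivalent, then their labeled versions φ_w(w) and φ_w(w') over Ñ are Knuth equivalent. -/
open scoped BigOperators

/-! ## Auxiliary lemmas for labeling -/

/-- Recursive labeling: `pre` records (in any order) the letters already read. -/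
def lbl : List ℕ → List ℕ → List LblN
  | _, [] => []
  | pre, a :: t => toLex (a, pre.count a + 1) :: lbl (a :: pre) t

lemma lbl_congr : ∀ (w pre pre' : List ℕ), (∀ k, pre.count k = pre'.count k) →
    lbl pre w = lbl pre' w
  | [], _, _, _ => rfl
  | a :: t, pre, pre', h => by
    simp only [lbl, h a]
    rw [lbl_congr t (a :: pre) (a :: pre') (fun k => by simp [List.count_cons, h k])]

lemma lbl_append : ∀ (x : List ℕ) (pre y : List ℕ),
    lbl pre (x ++ y) = lbl pre x ++ lbl (x.reverse ++ pre) y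
  | [], pre, y => by simp [lbl]
  | a :: t, pre, y => by
    simp [lbl, lbl_append t (a :: pre) y, List.append_assoc]

lemma lbl_length : ∀ (w pre : List ℕ), (lbl pre w).length = w.length
  | [], _ => rfl
  | a :: t, pre => by simp [lbl, lbl_length t]

lemma lbl_getElem : ∀ (w pre : List ℕ) (i : ℕ) (h : i < w.length),
    (lbl pre w)[i]'(by rw [lbl_length]; exact h) =
      toLex (w[i], (pre ++ w.take i).count w[i] + 1)
  | a :: t, pre, 0, h => by simp [lbl]
  | a :: t, pre, i + 1, h => by
    have ht : i < t.length := by simpa using h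
    simp only [lbl, List.getElem_cons_succ, lbl_getElem t (a :: pre) i ht]
    congr 2
    simp [List.count_append, List.count_cons]
    ring

lemma phiW_eq_lbl (w : List ℕ) : phiW w = lbl [] w := by
  apply List.ext_getElem
  · simp [phiW, lbl_length]
  · intro i h1 h2
    have hi : i < w.length := by simpa [phiW] using h1
    rw [lbl_getElem w [] i hi]
    simp [phiW, List.getElem_zipIdx]

lemma phiW_middle (u x v : List ℕ) :
    phiW (u ++ x ++ v) = lbl [] u ++ lbl u.reverse x ++ lbl (x.reverse ++ u.reverse) v := by
  rw [phiW_eq_lbl, List.append_assoc, lbl_append, lbl_append]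
  simp [List.append_assoc]

lemma liftK {w w' : List ℕ} (h : KnuthK w w') : KnuthK (phiW w) (phiW w') := by
  obtain ⟨u, v, a, b, c, hab, hbc, hw, hw'⟩ := h
  subst hw hw'
  have hac : a < c := lt_of_lt_of_le hab hbc
  have hab' : a ≠ b := ne_of_lt hab
  have hac' : a ≠ c := ne_of_lt hac
  set ur := u.reverse with hur
  rw [phiW_middle, phiW_middle]
  refine ⟨lbl [] u, lbl ([a, c, b] ++ ur) v,
    toLex (a, ur.count a + 1), toLex (b, ur.count b + 1), toLex (c, (b :: ur).count c + 1),
    ?_, ?_, ?_, ?_⟩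
  · rw [Prod.Lex.lt_iff]; exact Or.inl hab
  · rw [Prod.Lex.le_iff]
    rcases lt_or_eq_of_le hbc with h | h
    · exact Or.inl h
    · subst h
      exact Or.inr ⟨rfl, by simp [List.count_cons]⟩
  · congr 1
    · simp only [lbl]
      congr 3 <;> simp [hur, List.count_cons, List.count_reverse, hac'.symm, hab'.symm]
  · congr 1
    · congr 1
      · simp only [lbl]
        congr 3 <;> simp [hur, List.count_cons, List.count_reverse, hab'.symm, hac'.symm, hac']
    · exact lbl_congr v _ _ (fun k => by simp [hur, List.count_cons, List.count_reverse]; ring)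

lemma liftK' {w w' : List ℕ} (h : KnuthK' w w') : KnuthK' (phiW w) (phiW w') := by
  obtain ⟨u, v, a, b, c, hab, hbc, hw, hw'⟩ := h
  subst hw hw'
  have hac : a < c := lt_of_le_of_lt hab hbc
  have hbc' : b ≠ c := ne_of_lt hbc
  have hac' : a ≠ c := ne_of_lt hac
  set ur := u.reverse with hur
  rw [phiW_middle, phiW_middle]
  refine ⟨lbl [] u, lbl ([b, c, a] ++ ur) v,
    toLex (a, ur.count a + 1), toLex (b, (a :: ur).count b + 1), toLex (c, ur.count c + 1),
    ?_, ?_, ?_, ?_⟩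
  · rw [Prod.Lex.le_iff]
    rcases lt_or_eq_of_le hab with h | h
    · exact Or.inl h
    · subst h
      exact Or.inr ⟨rfl, by simp [List.count_cons]⟩
  · rw [Prod.Lex.lt_iff]; exact Or.inl hbc
  · congr 1
    · simp only [lbl]
      congr 3 <;> simp [hur, List.count_cons, List.count_reverse, hac'.symm, hbc'.symm, hac']
  · congr 1
    · congr 1
      · simp only [lbl]
        congr 3 <;> simp [hur, List.count_cons, List.count_reverse, hac', hbc'.symm, hac'.symm]
    · exact lbl_congr v _ _ (fun k => by simp [hur, List.count_cons, List.count_reverse]; ring)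

lemma liftRel {w w' : List ℕ} (h : KnuthRel w w') : KnuthRel (phiW w) (phiW w') := by
  rcases h with h | h | h | h
  · exact Or.inl (liftK h)
  · exact Or.inr (Or.inl (liftK h))
  · exact Or.inr (Or.inr (Or.inl (liftK' h)))
  · exact Or.inr (Or.inr (Or.inr (liftK' h)))


theorem knuthEquiv_phiW (w w' : List ℕ) (h : KnuthEquiv w w') :
    KnuthEquiv (phiW w) (phiW w') := by
  exact Relation.ReflTransGen.lift phiW (fun _ _ => liftRel) w w' h
end

section
/- For partitions μ, ν and tableaux of complex variables s ∈ T(μ, ℂ), t ∈ T(ν, ℂ) in the domain of absolute convergence, the Schur multiple zeta functions satisfy ζ_μ(s) · ζ_ν(t) = ζ_{μ*ν}(s * t). -/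
open scoped BigOperators

/-! ## Auxiliary lemmas -/

section SchurAux

open Set

attribute [local instance] Classical.propDecidable

lemma part_antitone {p : ℕ → ℕ} (hp : IsPartition p) {a b : ℕ} (ha : 1 ≤ a) (hab : a ≤ b) :
    p b ≤ p a := by
  induction b with
  | zero => omega
  | succ n ih =>
    rcases Nat.lt_or_ge a (n + 1) with h | h
    · have han : a ≤ n := by omega
      exact le_trans (hp.2.1 n (le_trans ha han)) (ih han)
    · have : a = n + 1 := by omega
      subst this; rfl

lemma mem_cells_zero {p : ℕ → ℕ} {c : ℕ × ℕ} :
    c ∈ cells p zeroPart ↔ 1 ≤ c.1 ∧ 1 ≤ c.2 ∧ c.2 ≤ p c.1 := by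
  simp [cells, zeroPart, Nat.lt_iff_add_one_le]

lemma cells_finite {p : ℕ → ℕ} (hp : IsPartition p) : (cells p zeroPart).Finite := by
  obtain ⟨N, hN⟩ := hp.2.2
  apply Set.Finite.subset ((Set.finite_Icc 1 N).prod (Set.finite_Icc 1 (p 1)))
  intro c hc
  rw [mem_cells_zero] at hc
  obtain ⟨h1, h2, h3⟩ := hc
  have hiN : c.1 ≤ N := by
    by_contra h
    have : p c.1 = 0 := hN c.1 (by omega)
    omega
  exact ⟨⟨h1, hiN⟩, h2, le_trans h3 (part_antitone hp (le_refl 1) h1)⟩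

/-- The key characterization: for a partition `p`, the positive rows are exactly
`1, ..., conj p 1`. -/
lemma row_pos_iff {p : ℕ → ℕ} (hp : IsPartition p) (i : ℕ) :
    (1 ≤ i ∧ 1 ≤ p i) ↔ (1 ≤ i ∧ i ≤ conj p 1) := by
  set A : Set ℕ := {i : ℕ | 1 ≤ i ∧ 1 ≤ p i} with hA
  obtain ⟨N, hN⟩ := hp.2.2
  have hAfin : A.Finite := by
    apply Set.Finite.subset (Set.finite_Icc 1 N)
    intro j hj
    refine ⟨hj.1, ?_⟩
    by_contra h
    have : p j = 0 := hN j (by omega)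
    have := hj.2
    omega
  have hdc : ∀ j ∈ A, ∀ k, 1 ≤ k → k ≤ j → k ∈ A := by
    intro j hj k hk1 hkj
    exact ⟨hk1, le_trans hj.2 (part_antitone hp hk1 hkj)⟩
  have hconj : conj p 1 = A.ncard := rfl
  constructor
  · rintro ⟨h1, h2⟩
    refine ⟨h1, ?_⟩
    have hsub : Set.Icc 1 i ⊆ A := fun k hk => hdc i ⟨h1, h2⟩ k hk.1 hk.2
    have : (Set.Icc 1 i).ncard ≤ A.ncard := Set.ncard_le_ncard hsub hAfin
    rw [hconj]
    have hicc : (Set.Icc 1 i).ncard = i := by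
      rw [← Finset.coe_Icc, Set.ncard_coe_finset, Nat.card_Icc]
      omega
    omega
  · rintro ⟨h1, h2⟩
    refine ⟨h1, ?_⟩
    by_contra h
    have hpi : p i = 0 := by omega
    have hsub : A ⊆ Set.Ico 1 i := by
      intro j hj
      refine ⟨hj.1, ?_⟩
      by_contra hij
      have : p j ≤ p i := part_antitone hp h1 (by omega)
      have := hj.2
      omega
    have : A.ncard ≤ (Set.Ico 1 i).ncard := Set.ncard_le_ncard hsub (Set.finite_Ico 1 i)
    have hicc : (Set.Ico 1 i).ncard = i - 1 := by
      rw [← Finset.coe_Ico, Set.ncard_coe_finset, Nat.card_Ico]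
    rw [hconj] at h2
    omega

lemma part_eq_zero_of_gt {p : ℕ → ℕ} (hp : IsPartition p) {i : ℕ} (h : conj p 1 < i) :
    p i = 0 := by
  by_contra hne
  have h1 : 1 ≤ i := by
    rcases Nat.eq_zero_or_pos i with h0 | h0
    · subst h0; exact absurd hp.1 hne
    · exact h0
  have := (row_pos_iff hp i).mp ⟨h1, by omega⟩
  omega

lemma part_pos_of_le {p : ℕ → ℕ} (hp : IsPartition p) {i : ℕ} (h1 : 1 ≤ i)
    (h2 : i ≤ conj p 1) : 1 ≤ p i :=
  ((row_pos_iff hp i).mpr ⟨h1, h2⟩).2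

/-- Characterization of the cells of the shape `μ * ν`. -/
lemma mem_cells_star {mu nu : ℕ → ℕ} {c : ℕ × ℕ} :
    c ∈ cells (starOuter mu nu) (starInner mu nu) ↔
      (1 ≤ c.1 ∧ c.1 ≤ conj nu 1 ∧ mu 1 < c.2 ∧ c.2 ≤ mu 1 + nu c.1) ∨
      (conj nu 1 < c.1 ∧ 1 ≤ c.2 ∧ c.2 ≤ mu (c.1 - conj nu 1)) := by
  simp only [cells, starOuter, starInner, Set.mem_setOf_eq]
  rcases Nat.eq_zero_or_pos c.1 with h0 | h0
  · rw [if_pos h0]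
    constructor
    · rintro ⟨h1, _, h3⟩; omega
    · rintro (⟨h1, _⟩ | ⟨h1, _⟩) <;> omega
  · have hne : ¬ c.1 = 0 := by omega
    rcases le_or_gt c.1 (conj nu 1) with h | h
    · rw [if_neg hne, if_pos h, if_pos ⟨h0, h⟩]
      constructor
      · rintro ⟨_, h2, h3⟩; exact Or.inl ⟨h0, h, h2, h3⟩
      · rintro (⟨_, _, h2, h3⟩ | ⟨h1, _, _⟩)
        · exact ⟨h0, h2, h3⟩
        · omega
    · rw [if_neg hne, if_neg (show ¬ c.1 ≤ conj nu 1 by omega),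
        if_neg (show ¬ (1 ≤ c.1 ∧ c.1 ≤ conj nu 1) by omega)]
      constructor
      · rintro ⟨_, h2, h3⟩; exact Or.inr ⟨h, by omega, h3⟩
      · rintro (⟨_, h2, _, _⟩ | ⟨_, h2, h3⟩)
        · omega
        · exact ⟨h0, by omega, h3⟩

lemma mem_cells_zero' {p : ℕ → ℕ} {i j : ℕ} :
    (i, j) ∈ cells p zeroPart ↔ 1 ≤ i ∧ 1 ≤ j ∧ j ≤ p i := mem_cells_zero

lemma mem_cells_star' {mu nu : ℕ → ℕ} {i j : ℕ} :
    (i, j) ∈ cells (starOuter mu nu) (starInner mu nu) ↔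
      (1 ≤ i ∧ i ≤ conj nu 1 ∧ mu 1 < j ∧ j ≤ mu 1 + nu i) ∨
      (conj nu 1 < i ∧ 1 ≤ j ∧ j ≤ mu (i - conj nu 1)) := mem_cells_star

lemma cells_star_eq {mu nu : ℕ → ℕ} (hnu : IsPartition nu) :
    cells (starOuter mu nu) (starInner mu nu) =
      (fun c : ℕ × ℕ => (c.1, c.2 + mu 1)) '' cells nu zeroPart ∪
      (fun c : ℕ × ℕ => (c.1 + conj nu 1, c.2)) '' cells mu zeroPart := by
  ext ⟨i, j⟩
  rw [mem_cells_star']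
  constructor
  · rintro (⟨h1, h2, h3, h4⟩ | ⟨h1, h2, h3⟩)
    · left
      refine ⟨(i, j - mu 1), mem_cells_zero'.mpr ⟨h1, by omega, by omega⟩, ?_⟩
      simp only [Prod.mk.injEq]
      exact ⟨trivial, by omega⟩
    · right
      refine ⟨(i - conj nu 1, j), mem_cells_zero'.mpr ⟨by omega, h2, h3⟩, ?_⟩
      simp only [Prod.mk.injEq]
      exact ⟨by omega, trivial⟩
  · rintro (⟨⟨a, b⟩, hab, heq⟩ | ⟨⟨a, b⟩, hab, heq⟩)
    · rw [mem_cells_zero'] at hab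
      obtain ⟨ha, hb, hbn⟩ := hab
      simp only [Prod.mk.injEq] at heq
      obtain ⟨rfl, rfl⟩ := heq
      left
      have haq : a ≤ conj nu 1 := ((row_pos_iff hnu a).mp ⟨ha, by omega⟩).2
      exact ⟨ha, haq, by omega, by omega⟩
    · rw [mem_cells_zero'] at hab
      obtain ⟨ha, hb, hbn⟩ := hab
      simp only [Prod.mk.injEq] at heq
      obtain ⟨rfl, rfl⟩ := heq
      right
      exact ⟨by omega, hb, by simpa using hbn⟩

lemma cells_star_finite {mu nu : ℕ → ℕ} (hmu : IsPartition mu) (hnu : IsPartition nu) :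
    (cells (starOuter mu nu) (starInner mu nu)).Finite := by
  rw [cells_star_eq hnu]
  exact ((cells_finite hnu).image _).union ((cells_finite hmu).image _)

lemma starTab_nu' {γ : Type*} {mu nu : ℕ → ℕ} (hnu : IsPartition nu) (X Y : ℕ × ℕ → γ)
    {i j : ℕ} (hc : (i, j) ∈ cells nu zeroPart) :
    starTab mu nu X Y (i, j + mu 1) = Y (i, j) := by
  rw [mem_cells_zero'] at hc
  have hq : i ≤ conj nu 1 := ((row_pos_iff hnu i).mp ⟨hc.1, by omega⟩).2
  simp only [starTab, if_pos hq, Nat.add_sub_cancel]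

lemma starTab_mu' {γ : Type*} {mu nu : ℕ → ℕ} (X Y : ℕ × ℕ → γ)
    {i j : ℕ} (hc : (i, j) ∈ cells mu zeroPart) :
    starTab mu nu X Y (i + conj nu 1, j) = X (i, j) := by
  rw [mem_cells_zero'] at hc
  have h : ¬ (i + conj nu 1 ≤ conj nu 1) := by omega
  simp only [starTab, if_neg h, Nat.add_sub_cancel]

/-- `S * T` is a semistandard tableau of shape `μ * ν`. -/
lemma starTab_mem_SSYTset {mu nu : ℕ → ℕ} (hmu : IsPartition mu) (hnu : IsPartition nu)
    {M N : ℕ × ℕ → ℕ} (hM : M ∈ SSYTset mu zeroPart) (hN : N ∈ SSYTset nu zeroPart) :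
    starTab mu nu M N ∈ SSYTset (starOuter mu nu) (starInner mu nu) := by
  set q := conj nu 1 with hq
  refine ⟨⟨?_, ?_⟩, ?_, ?_⟩
  · -- rows weakly increase
    intro i j hc hc'
    rw [mem_cells_star'] at hc hc'
    rcases hc with ⟨h1, h2, h3, h4⟩ | ⟨h1, h2, h3⟩
    · have hcn : (i, j - mu 1) ∈ cells nu zeroPart :=
        mem_cells_zero'.mpr ⟨h1, by omega, by omega⟩
      have hcn' : (i, j - mu 1 + 1) ∈ cells nu zeroPart := by
        rcases hc' with ⟨_, _, _, h4'⟩ | ⟨h1', _, _⟩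
        · exact mem_cells_zero'.mpr ⟨h1, by omega, by omega⟩
        · omega
      have e1 := starTab_nu' (mu := mu) hnu M N hcn
      have e2 := starTab_nu' (mu := mu) hnu M N hcn'
      have ej : j - mu 1 + mu 1 = j := by omega
      have ej' : j - mu 1 + 1 + mu 1 = j + 1 := by omega
      rw [ej] at e1; rw [ej'] at e2
      rw [e1, e2]
      exact hN.1.1 i (j - mu 1) hcn hcn'
    · have hcm : (i - q, j) ∈ cells mu zeroPart := mem_cells_zero'.mpr ⟨by omega, h2, h3⟩
      have hcm' : (i - q, j + 1) ∈ cells mu zeroPart := by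
        rcases hc' with ⟨_, h2', _, _⟩ | ⟨_, _, h3'⟩
        · omega
        · exact mem_cells_zero'.mpr ⟨by omega, by omega, h3'⟩
      have e1 := starTab_mu' (nu := nu) M N hcm
      have e2 := starTab_mu' (nu := nu) M N hcm'
      have ei : i - q + conj nu 1 = i := by omega
      rw [ei] at e1 e2
      rw [e1, e2]
      exact hM.1.1 (i - q) j hcm hcm'
  · -- columns strictly increase
    intro i j hc hc'
    rw [mem_cells_star'] at hc hc'
    rcases hc with ⟨h1, h2, h3, h4⟩ | ⟨h1, h2, h3⟩
    · rcases hc' with ⟨_, h2', h3', h4'⟩ | ⟨h1', h2', h3'⟩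
      · -- both in the ν part
        have hcn : (i, j - mu 1) ∈ cells nu zeroPart :=
          mem_cells_zero'.mpr ⟨h1, by omega, by omega⟩
        have hcn' : (i + 1, j - mu 1) ∈ cells nu zeroPart :=
          mem_cells_zero'.mpr ⟨by omega, by omega, by omega⟩
        have e1 := starTab_nu' (mu := mu) hnu M N hcn
        have e2 := starTab_nu' (mu := mu) hnu M N hcn'
        have ej : j - mu 1 + mu 1 = j := by omega
        rw [ej] at e1 e2
        rw [e1, e2]
        exact hN.1.2 i (j - mu 1) hcn hcn'
      · -- boundary case i = q : impossible since j > mu 1 and j ≤ mu 1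
        have hiq : i = q := by omega
        have he : i + 1 - q = 1 := by omega
        rw [he] at h3'
        omega
    · -- (i,j) in the μ part; then (i+1,j) must also be in the μ part
      rcases hc' with ⟨_, h2', _, _⟩ | ⟨h1', h2', h3'⟩
      · omega
      · have hcm : (i - q, j) ∈ cells mu zeroPart := mem_cells_zero'.mpr ⟨by omega, h2, h3⟩
        have hcm' : (i - q + 1, j) ∈ cells mu zeroPart := by
          refine mem_cells_zero'.mpr ⟨by omega, h2', ?_⟩
          have he : i + 1 - q = i - q + 1 := by omega
          rw [he] at h3'
          exact h3'
        have e1 := starTab_mu' (nu := nu) M N hcm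
        have e2 := starTab_mu' (nu := nu) M N hcm'
        have ei : i - q + conj nu 1 = i := by omega
        have ei' : i - q + 1 + conj nu 1 = i + 1 := by omega
        rw [ei] at e1; rw [ei'] at e2
        rw [e1, e2]
        exact hM.1.2 (i - q) j hcm hcm'
  · -- positivity on cells
    rintro ⟨i, j⟩ hc
    rw [mem_cells_star'] at hc
    rcases hc with ⟨h1, h2, h3, h4⟩ | ⟨h1, h2, h3⟩
    · have hcn : (i, j - mu 1) ∈ cells nu zeroPart :=
        mem_cells_zero'.mpr ⟨h1, by omega, by omega⟩
      have e1 := starTab_nu' (mu := mu) hnu M N hcn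
      have ej : j - mu 1 + mu 1 = j := by omega
      rw [ej] at e1
      rw [e1]
      exact hN.2.1 _ hcn
    · have hcm : (i - conj nu 1, j) ∈ cells mu zeroPart :=
        mem_cells_zero'.mpr ⟨by omega, h2, h3⟩
      have e1 := starTab_mu' (nu := nu) M N hcm
      have ei : i - conj nu 1 + conj nu 1 = i := by omega
      rw [ei] at e1
      rw [e1]
      exact hM.2.1 _ hcm
  · -- zero off cells
    rintro ⟨i, j⟩ hc
    simp only [starTab]
    split_ifs with hiq
    · apply hN.2.2
      intro hmem
      rw [mem_cells_zero'] at hmem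
      obtain ⟨ha, hb, hbn⟩ := hmem
      exact hc (mem_cells_star'.mpr (Or.inl ⟨ha, hiq, by omega, by omega⟩))
    · apply hM.2.2
      intro hmem
      rw [mem_cells_zero'] at hmem
      obtain ⟨ha, hb, hbn⟩ := hmem
      exact hc (mem_cells_star'.mpr (Or.inr ⟨by omega, hb, hbn⟩))

/-- Restricting a star tableau to the μ (bottom) part. -/
lemma star_restrict_mu {mu nu : ℕ → ℕ} {P : ℕ × ℕ → ℕ}
    (hP : P ∈ SSYTset (starOuter mu nu) (starInner mu nu)) :
    (fun c : ℕ × ℕ => if c ∈ cells mu zeroPart then P (c.1 + conj nu 1, c.2) else 0)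
      ∈ SSYTset mu zeroPart := by
  have key : ∀ i j : ℕ, (i, j) ∈ cells mu zeroPart →
      (i + conj nu 1, j) ∈ cells (starOuter mu nu) (starInner mu nu) := by
    intro i j hc
    rw [mem_cells_zero'] at hc
    exact mem_cells_star'.mpr (Or.inr ⟨by omega, hc.2.1, by simpa using hc.2.2⟩)
  refine ⟨⟨?_, ?_⟩, ?_, ?_⟩
  · intro i j hc hc'
    simp only [if_pos hc, if_pos hc']
    exact hP.1.1 (i + conj nu 1) j (key i j hc) (key i (j + 1) hc')
  · intro i j hc hc'
    simp only [if_pos hc, if_pos hc']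
    show P (i + conj nu 1, j) < P (i + 1 + conj nu 1, j)
    have e : i + 1 + conj nu 1 = i + conj nu 1 + 1 := by omega
    rw [e]
    exact hP.1.2 (i + conj nu 1) j (key i j hc) (by
      have := key (i + 1) j hc'
      rw [e] at this
      exact this)
  · rintro ⟨i, j⟩ hc
    simp only [if_pos hc]
    exact hP.2.1 _ (key i j hc)
  · intro c hc
    simp only [if_neg hc]

/-- Restricting a star tableau to the ν (right) part. -/
lemma star_restrict_nu {mu nu : ℕ → ℕ} (hnu : IsPartition nu) {P : ℕ × ℕ → ℕ}
    (hP : P ∈ SSYTset (starOuter mu nu) (starInner mu nu)) :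
    (fun c : ℕ × ℕ => if c ∈ cells nu zeroPart then P (c.1, c.2 + mu 1) else 0)
      ∈ SSYTset nu zeroPart := by
  have key : ∀ i j : ℕ, (i, j) ∈ cells nu zeroPart →
      (i, j + mu 1) ∈ cells (starOuter mu nu) (starInner mu nu) := by
    intro i j hc
    rw [mem_cells_zero'] at hc
    have hq : i ≤ conj nu 1 := ((row_pos_iff hnu i).mp ⟨hc.1, by omega⟩).2
    exact mem_cells_star'.mpr (Or.inl ⟨hc.1, hq, by omega, by omega⟩)
  refine ⟨⟨?_, ?_⟩, ?_, ?_⟩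
  · intro i j hc hc'
    simp only [if_pos hc, if_pos hc']
    show P (i, j + mu 1) ≤ P (i, j + 1 + mu 1)
    have e : j + 1 + mu 1 = j + mu 1 + 1 := by omega
    rw [e]
    exact hP.1.1 i (j + mu 1) (key i j hc) (by
      have := key i (j + 1) hc'
      rw [e] at this
      exact this)
  · intro i j hc hc'
    simp only [if_pos hc, if_pos hc']
    exact hP.1.2 i (j + mu 1) (key i j hc) (key (i + 1) j hc')
  · rintro ⟨i, j⟩ hc
    simp only [if_pos hc]
    exact hP.2.1 _ (key i j hc)
  · intro c hc
    simp only [if_neg hc]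

/-- The bijection between pairs of tableaux and star tableaux. -/
noncomputable def starEquiv (mu nu : ℕ → ℕ) (hmu : IsPartition mu) (hnu : IsPartition nu) :
    (SSYTset mu zeroPart × SSYTset nu zeroPart) ≃
      SSYTset (starOuter mu nu) (starInner mu nu) where
  toFun p := ⟨starTab mu nu (p.1 : ℕ × ℕ → ℕ) (p.2 : ℕ × ℕ → ℕ),
    starTab_mem_SSYTset hmu hnu p.1.2 p.2.2⟩
  invFun P :=
    (⟨fun c => if c ∈ cells mu zeroPart then (P : ℕ × ℕ → ℕ) (c.1 + conj nu 1, c.2) else 0,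
        star_restrict_mu P.2⟩,
     ⟨fun c => if c ∈ cells nu zeroPart then (P : ℕ × ℕ → ℕ) (c.1, c.2 + mu 1) else 0,
        star_restrict_nu hnu P.2⟩)
  left_inv := by
    rintro ⟨⟨M, hM⟩, ⟨N, hN⟩⟩
    simp only [Prod.mk.injEq, Subtype.mk.injEq]
    constructor
    · funext c
      obtain ⟨i, j⟩ := c
      split_ifs with hc
      · exact starTab_mu' (nu := nu) M N hc
      · exact (hM.2.2 _ hc).symm
    · funext c
      obtain ⟨i, j⟩ := c
      split_ifs with hc
      · exact starTab_nu' (mu := mu) hnu M N hc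
      · exact (hN.2.2 _ hc).symm
  right_inv := by
    rintro ⟨P, hP⟩
    simp only [Subtype.mk.injEq]
    funext c
    obtain ⟨i, j⟩ := c
    simp only [starTab]
    split_ifs with hiq hc hc
    · have hm := mem_cells_zero'.mp hc
      congr 1
      simp only [Prod.mk.injEq]
      exact ⟨trivial, by omega⟩
    · refine (hP.2.2 (i, j) ?_).symm
      intro hmem
      rw [mem_cells_star'] at hmem
      rcases hmem with ⟨h1, h2, h3, h4⟩ | ⟨h1, _, _⟩
      · exact hc (mem_cells_zero'.mpr ⟨h1, by omega, by omega⟩)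
      · omega
    · congr 1
      simp only [Prod.mk.injEq]
      exact ⟨by omega, trivial⟩
    · refine (hP.2.2 (i, j) ?_).symm
      intro hmem
      rw [mem_cells_star'] at hmem
      rcases hmem with ⟨_, h2, _, _⟩ | ⟨h1, h2, h3⟩
      · omega
      · exact hc (mem_cells_zero'.mpr ⟨by omega, h2, h3⟩)

/-- The factorization of the zeta-term for a star tableau. -/
lemma finprod_star {mu nu : ℕ → ℕ} (hmu : IsPartition mu) (hnu : IsPartition nu)
    (M N : ℕ × ℕ → ℕ) (s t : ℕ × ℕ → ℂ) :
    (∏ᶠ c ∈ cells (starOuter mu nu) (starInner mu nu),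
        ((starTab mu nu M N c : ℕ) : ℂ) ^ (-(starTab mu nu s t c))) =
      (∏ᶠ c ∈ cells mu zeroPart, ((M c : ℕ) : ℂ) ^ (-(s c))) *
        ∏ᶠ c ∈ cells nu zeroPart, ((N c : ℕ) : ℂ) ^ (-(t c)) := by
  rw [cells_star_eq hnu]
  have hdisj : Disjoint ((fun c : ℕ × ℕ => (c.1, c.2 + mu 1)) '' cells nu zeroPart)
      ((fun c : ℕ × ℕ => (c.1 + conj nu 1, c.2)) '' cells mu zeroPart) := by
    rw [Set.disjoint_left]
    rintro ⟨i, j⟩ ⟨⟨a, b⟩, ha, heq⟩ ⟨⟨a', b'⟩, ha', heq'⟩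
    rw [mem_cells_zero'] at ha ha'
    simp only [Prod.mk.injEq] at heq heq'
    have hq : a ≤ conj nu 1 := ((row_pos_iff hnu a).mp ⟨ha.1, by omega⟩).2
    omega
  rw [finprod_mem_union hdisj ((cells_finite hnu).image _) ((cells_finite hmu).image _)]
  have hinj1 : Set.InjOn (fun c : ℕ × ℕ => (c.1, c.2 + mu 1)) (cells nu zeroPart) := by
    rintro ⟨a, b⟩ _ ⟨a', b'⟩ _ heq
    simp only [Prod.mk.injEq] at heq ⊢
    omega
  have hinj2 : Set.InjOn (fun c : ℕ × ℕ => (c.1 + conj nu 1, c.2)) (cells mu zeroPart) := by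
    rintro ⟨a, b⟩ _ ⟨a', b'⟩ _ heq
    simp only [Prod.mk.injEq] at heq ⊢
    omega
  rw [finprod_mem_image hinj1, finprod_mem_image hinj2]
  rw [mul_comm]
  congr 1
  · refine finprod_mem_congr rfl fun c hc => ?_
    obtain ⟨i, j⟩ := c
    simp only
    rw [starTab_mu' (nu := nu) M N hc, starTab_mu' (nu := nu) s t hc]
  · refine finprod_mem_congr rfl fun c hc => ?_
    obtain ⟨i, j⟩ := c
    simp only
    rw [starTab_nu' (mu := mu) hnu M N hc, starTab_nu' (mu := mu) hnu s t hc]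

/-- The zeta-term of a semistandard tableau never vanishes. -/
lemma term_ne_zero {lam : ℕ → ℕ} (hlam : IsPartition lam) {M : ℕ × ℕ → ℕ}
    (hM : M ∈ SSYTset lam zeroPart) (s : ℕ × ℕ → ℂ) :
    (∏ᶠ c ∈ cells lam zeroPart, ((M c : ℕ) : ℂ) ^ (-(s c))) ≠ 0 := by
  have hfin := cells_finite hlam
  rw [← hfin.coe_toFinset, finprod_mem_coe_finset]
  rw [Finset.prod_ne_zero_iff]
  intro c hc
  rw [Set.Finite.mem_toFinset] at hc
  have h1 : 1 ≤ M c := hM.2.1 c hc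
  have hz : ((M c : ℕ) : ℂ) ≠ 0 := Nat.cast_ne_zero.mpr (by omega)
  rw [Complex.cpow_def_of_ne_zero hz]
  exact Complex.exp_ne_zero _

/-- Every shape has a semistandard tableau. -/
lemma SSYTset_nonempty (lam mu : ℕ → ℕ) : (SSYTset lam mu).Nonempty := by
  refine ⟨fun c => if c ∈ cells lam mu then c.1 else 0, ⟨?_, ?_⟩, ?_, ?_⟩
  · intro i j hc hc'
    simp only [if_pos hc, if_pos hc']
    omega
  · intro i j hc hc'
    simp only [if_pos hc, if_pos hc']
    omega
  · intro c hc
    simp only [if_pos hc]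
    exact hc.1
  · intro c hc
    simp only [if_neg hc]

end SchurAux

theorem schurZeta_mul (mu nu : ℕ → ℕ) (hmu : IsPartition mu) (hnu : IsPartition nu)
    (s t : ℕ × ℕ → ℂ) (hs : InDomain mu zeroPart s) (ht : InDomain nu zeroPart t) :
    schurZeta mu zeroPart s * schurZeta nu zeroPart t
      = schurZeta (starOuter mu nu) (starInner mu nu) (starTab mu nu s t) := by
  classical
  set f : SSYTset mu zeroPart → ℂ :=
    fun M => ∏ᶠ c ∈ cells mu zeroPart, ((M : ℕ × ℕ → ℕ) c : ℂ) ^ (-(s c)) with hf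
  set g : SSYTset nu zeroPart → ℂ :=
    fun N => ∏ᶠ c ∈ cells nu zeroPart, ((N : ℕ × ℕ → ℕ) c : ℂ) ^ (-(t c)) with hg
  have key : schurZeta (starOuter mu nu) (starInner mu nu) (starTab mu nu s t)
      = ∑' p : SSYTset mu zeroPart × SSYTset nu zeroPart, f p.1 * g p.2 := by
    rw [schurZeta, ← Equiv.tsum_eq (starEquiv mu nu hmu hnu)]
    refine tsum_congr fun p => ?_
    exact finprod_star hmu hnu (p.1 : ℕ × ℕ → ℕ) (p.2 : ℕ × ℕ → ℕ) s t
  have lhs1 : schurZeta mu zeroPart s = ∑' a : SSYTset mu zeroPart, f a := rfl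
  have lhs2 : schurZeta nu zeroPart t = ∑' b : SSYTset nu zeroPart, g b := rfl
  rw [lhs1, lhs2, key]
  by_cases hsum : Summable f ∧ Summable g
  · exact tsum_mul_tsum_of_summable_norm (summable_norm_iff.mpr hsum.1)
      (summable_norm_iff.mpr hsum.2)
  · obtain ⟨M0, hM0⟩ := SSYTset_nonempty mu zeroPart
    obtain ⟨N0, hN0⟩ := SSYTset_nonempty nu zeroPart
    set a0 : SSYTset mu zeroPart := ⟨M0, hM0⟩
    set b0 : SSYTset nu zeroPart := ⟨N0, hN0⟩
    have hfa0 : f a0 ≠ 0 := term_ne_zero hmu hM0 s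
    have hgb0 : g b0 ≠ 0 := term_ne_zero hnu hN0 t
    have hnot : ¬ Summable (fun p : SSYTset mu zeroPart × SSYTset nu zeroPart =>
        f p.1 * g p.2) := by
      intro hS
      apply hsum
      constructor
      · have hinj : Function.Injective
            (fun a : SSYTset mu zeroPart => (a, b0)) := fun x y h => by
          simpa using congrArg Prod.fst h
        have h1 := hS.comp_injective hinj
        have h2 := h1.mul_right (g b0)⁻¹
        have h3 : (fun a : SSYTset mu zeroPart => f a * g b0 * (g b0)⁻¹) = f := by
          funext a
          rw [mul_assoc, mul_inv_cancel₀ hgb0, mul_one]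
        rwa [show ((fun p : SSYTset mu zeroPart × SSYTset nu zeroPart => f p.1 * g p.2) ∘
          (fun a : SSYTset mu zeroPart => (a, b0))) = fun a => f a * g b0 from rfl,
          h3] at h2
      · have hinj : Function.Injective
            (fun b : SSYTset nu zeroPart => (a0, b)) := fun x y h => by
          simpa using congrArg Prod.snd h
        have h1 := hS.comp_injective hinj
        have h2 := h1.mul_right (f a0)⁻¹
        have h3 : (fun b : SSYTset nu zeroPart => f a0 * g b * (f a0)⁻¹) = g := by
          funext b
          rw [mul_comm (f a0) (g b), mul_assoc, mul_inv_cancel₀ hfa0, mul_one]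
        rwa [show ((fun p : SSYTset mu zeroPart × SSYTset nu zeroPart => f p.1 * g p.2) ∘
          (fun b : SSYTset nu zeroPart => (a0, b))) = fun b => f a0 * g b from rfl,
          h3] at h2
    rw [tsum_eq_zero_of_not_summable hnot]
    rcases not_and_or.mp hsum with h | h
    · rw [tsum_eq_zero_of_not_summable h, zero_mul]
    · rw [tsum_eq_zero_of_not_summable h, mul_zero]
end
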